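/- Let G be a finite group and N a normal subgroup of G such that G/N has odd order. If χ is a real-valued irreducible complex character of G, then every irreducible constituent of the restriction χ_N of χ to N is real-valued. -/

import Mathlib

noncomputable section

/-- The inner product `[φ, ψ] = |G|⁻¹ ∑_{g ∈ G} φ(g) · conj (ψ(g))` of two class
functions of the finite group `G`. -/
def charInner (G : Type) [Group G] [Fintype G] (φ ψ : G → ℂ) : ℂ :=
  (Fintype.card G : ℂ)⁻¹ * ∑ g : G, φ g * (starRingEnd ℂ) (ψ g)

/-- The permutation character `(1_H)^G` of `G` acting on the cosets `G ⧸ H`: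
its value at `g` is the number of cosets fixed by `g`. -/
def permChar (G : Type) [Group G] [Fintype G] (H : Subgroup G) (g : G) : ℂ :=
  ({q : G ⧸ H | g • q = q}.ncard : ℂ)

/-- `χ` is an irreducible complex character of `G`, i.e. the character of some
simple (irreducible) finite-dimensional complex representation of `G`. -/
def IsIrredChar (G : Type) [Group G] [Fintype G] (χ : G → ℂ) : Prop :=
  ∃ V : FDRep ℂ G, CategoryTheory.Simple V ∧ V.character = χ

/-- A function `χ : G → ℂ` is real-valued if all its values are fixed by conjugation. -/
def RealValued (G : Type) [Group G] (χ : G → ℂ) : Prop :=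
  ∀ g : G, (starRingEnd ℂ) (χ g) = χ g

/-- The Frobenius–Schur indicator `ν₂(χ) = |G|⁻¹ ∑_{g ∈ G} χ(g²)`. -/
def FSIndicator (G : Type) [Group G] [Fintype G] (χ : G → ℂ) : ℂ :=
  (Fintype.card G : ℂ)⁻¹ * ∑ g : G, χ (g ^ 2)

open Module LinearMap Set

variable {V : Type} [AddCommGroup V] [Module ℂ V] [FiniteDimensional ℂ V]

lemma trace_pow_restrict_eig (f : Module.End ℂ V) (μ : ℂ) (k : ℕ)
    (h : ∀ x ∈ f.maxGenEigenspace μ, f x ∈ f.maxGenEigenspace μ) :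
    LinearMap.trace ℂ _ ((f.restrict h) ^ k)
      = μ ^ k * (finrank ℂ (f.maxGenEigenspace μ) : ℂ) := by
  set S := f.maxGenEigenspace μ
  set g := f.restrict h with hg
  set b : Module.End ℂ S := algebraMap ℂ (Module.End ℂ S) μ with hb
  have hcomm : Commute b g := Algebra.commutes μ g
  have hnil : IsNilpotent (g - b) :=
    f.isNilpotent_restrict_maxGenEigenspace_sub_algebraMap μ
  have hgeom := hcomm.symm.geom_sum₂_mul k
  -- (∑ i in range k, g ^ i * b ^ (k - 1 - i)) * (g - b) = g ^ k - b ^ k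
  have hnil2 : IsNilpotent ((∑ i ∈ Finset.range k, g ^ i * b ^ (k - 1 - i)) * (g - b)) := by
    refine Commute.isNilpotent_mul_left ?_ hnil
    refine Commute.sum_left _ _ _ (fun i _ => ?_)
    have hbx : ∀ x : Module.End ℂ S, Commute b x := fun x => Algebra.commutes μ x
    exact Commute.mul_left (((Commute.refl g).pow_left i).sub_right ((hbx _).symm))
      ((hbx (g - b)).pow_left _)
  rw [hgeom] at hnil2
  have htr : LinearMap.trace ℂ _ (g ^ k - b ^ k) = 0 := by
    have := LinearMap.isNilpotent_trace_of_isNilpotent hnil2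
    exact this.eq_zero
  have : LinearMap.trace ℂ _ (g ^ k) = LinearMap.trace ℂ _ (b ^ k) := by
    rw [map_sub] at htr; exact sub_eq_zero.mp htr
  rw [this, ← map_pow, Algebra.algebraMap_eq_smul_one, map_smul, LinearMap.trace_one,
    smul_eq_mul]


lemma restrict_one {S : Submodule ℂ V} (h : ∀ x ∈ S, (1 : Module.End ℂ V) x ∈ S) :
    (1 : Module.End ℂ V).restrict h = 1 := by
  ext x; rfl

lemma real_pow_eq_one {a : ℝ} (ha : 0 ≤ a) {m : ℕ} (hm : 0 < m) (h : a ^ m = 1) : a = 1 := by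
  rcases lt_trichotomy a 1 with hlt | heq | hgt
  · have := pow_lt_one₀ ha hlt hm.ne'
    rw [h] at this; exact absurd this (lt_irrefl 1)
  · exact heq
  · have := one_lt_pow₀ hgt hm.ne'
    rw [h] at this; exact absurd this (lt_irrefl 1)

lemma conj_trace_eq (f : Module.End ℂ V) (m : ℕ) (hm : 0 < m) (hf : f ^ m = 1) :
    (starRingEnd ℂ) (LinearMap.trace ℂ V f) = LinearMap.trace ℂ V (f ^ (m - 1)) := by
  classical
  have hds := DirectSum.isInternal_submodule_of_iSupIndep_of_iSup_eq_top
    f.independent_maxGenEigenspace f.iSup_maxGenEigenspace_eq_top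
  have hfin : {μ : ℂ | f.maxGenEigenspace μ ≠ ⊥}.Finite :=
    WellFoundedGT.finite_ne_bot_of_iSupIndep f.independent_maxGenEigenspace
  have hmap : ∀ (k : ℕ) (μ : ℂ), MapsTo (f ^ k) (f.maxGenEigenspace μ) (f.maxGenEigenspace μ) :=
    fun k μ => Module.End.mapsTo_maxGenEigenspace_of_comm ((Commute.refl f).pow_right k) μ
  have hmap1 : ∀ (μ : ℂ), ∀ x ∈ f.maxGenEigenspace μ, f x ∈ f.maxGenEigenspace μ :=
    fun μ => Module.End.mapsTo_maxGenEigenspace_of_comm (Commute.refl f) μ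
  have key : ∀ k : ℕ, LinearMap.trace ℂ V (f ^ k)
      = ∑ μ ∈ hfin.toFinset, μ ^ k * (finrank ℂ (f.maxGenEigenspace μ) : ℂ) := by
    intro k
    rw [LinearMap.trace_eq_sum_trace_restrict' hds hfin (fun μ => hmap k μ)]
    refine Finset.sum_congr rfl fun μ _ => ?_
    rw [← trace_pow_restrict_eig f μ k (hmap1 μ), Module.End.pow_restrict]
  have heig : ∀ μ ∈ hfin.toFinset, μ ^ m = 1 := by
    intro μ hμ
    have hnb : f.maxGenEigenspace μ ≠ ⊥ := by simpa using hμ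
    have hpos : 0 < finrank ℂ (f.maxGenEigenspace μ) := by
      rw [finrank_pos_iff]
      exact Submodule.nontrivial_iff_ne_bot.mpr hnb
    have hd : (finrank ℂ (f.maxGenEigenspace μ) : ℂ) ≠ 0 := by
      exact_mod_cast hpos.ne'
    have t1 := trace_pow_restrict_eig f μ m (hmap1 μ)
    rw [Module.End.pow_restrict] at t1
    have t2 : LinearMap.trace ℂ _ ((f ^ m).restrict (hmap m μ))
        = μ ^ m * (finrank ℂ (f.maxGenEigenspace μ) : ℂ) := t1
    have t4 : (f ^ m).restrict (hmap m μ) = 1 := by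
      refine LinearMap.ext fun x => ?_
      apply Subtype.ext
      show (f ^ m) (x : V) = (x : V); rw [hf]; rfl
    rw [t4, LinearMap.trace_one] at t2
    exact mul_right_cancel₀ hd (by rw [one_mul, ← t2])
  have hμconj : ∀ μ ∈ hfin.toFinset, (starRingEnd ℂ) μ = μ ^ (m - 1) := by
    intro μ hμ
    have h1 := heig μ hμ
    have hμ0 : μ ≠ 0 := by
      intro h0; rw [h0, zero_pow hm.ne'] at h1; exact zero_ne_one h1
    have hnsq : Complex.normSq μ = 1 := by
      have : Complex.normSq μ ^ m = 1 := by
        rw [← map_pow, h1, map_one]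
      exact real_pow_eq_one (Complex.normSq_nonneg μ) hm this
    have habs : μ * (starRingEnd ℂ) μ = 1 := by
      rw [Complex.mul_conj]
      exact_mod_cast congrArg (Complex.ofReal) hnsq
    have hpow : μ * μ ^ (m - 1) = 1 := by
      rw [← pow_succ', Nat.sub_add_cancel hm, h1]
    exact mul_left_cancel₀ hμ0 (habs.trans hpow.symm)
  have k1 : LinearMap.trace ℂ V f
      = ∑ μ ∈ hfin.toFinset, μ * (finrank ℂ (f.maxGenEigenspace μ) : ℂ) := by
    simpa using key 1
  rw [k1, key (m - 1), map_sum]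
  refine Finset.sum_congr rfl fun μ hμ => ?_
  rw [map_mul, hμconj μ hμ, map_natCast]

section RepStuff
open CategoryTheory FDRep

variable {H : Type} [Group H] [Fintype H]

lemma conj_char (U : FDRep ℂ H) (h : H) :
    (starRingEnd ℂ) (U.character h) = U.character h⁻¹ := by
  have hm : 0 < orderOf h := orderOf_pos h
  have hpow : (U.ρ h) ^ (orderOf h) = 1 := by
    rw [← map_pow, pow_orderOf_eq_one, map_one]
  have hinv : h ^ (orderOf h - 1) = h⁻¹ := by
    refine eq_inv_of_mul_eq_one_left ?_
    rw [← pow_succ, Nat.sub_add_cancel hm, pow_orderOf_eq_one]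
  have := conj_trace_eq (U.ρ h) (orderOf h) hm hpow
  show (starRingEnd ℂ) (LinearMap.trace ℂ U (U.ρ h)) = LinearMap.trace ℂ U (U.ρ h⁻¹)
  rw [this, ← map_pow, hinv]

set_option maxHeartbeats 1000000 in
lemma sum_char_mul_eq_finrank_hom (A B : FDRep ℂ H) :
    ∑ h : H, A.character h * B.character h⁻¹
      = (Fintype.card H : ℂ) * (finrank ℂ (B ⟶ A) : ℂ) := by
  have : Invertible (Fintype.card H : ℂ) :=
    invertibleOfNonzero (Nat.cast_ne_zero.mpr Fintype.card_ne_zero)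
  conv_lhs =>
    enter [2, h]
    rw [mul_comm, ← char_dual, ← Pi.mul_apply, ← char_tensor,
      char_iso (FDRep.dualTensorIsoLinHom B.ρ A)]
  have h1 := FDRep.average_char_eq_finrank_invariants (FDRep.of (Representation.linHom B.ρ A.ρ))
  rw [show (FDRep.of (Representation.linHom B.ρ A.ρ)).ρ = Representation.linHom B.ρ A.ρ from
    FDRep.of_ρ' _] at h1
  have h2 := (Representation.linHom.invariantsEquivFDRepHom (G := H) B A).finrank_eq
  calc ∑ h : H, (FDRep.of (Representation.linHom B.ρ A.ρ)).character h
      = (Fintype.card H : ℂ) * (⅟(Fintype.card H : ℂ)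
          • ∑ h : H, (FDRep.of (Representation.linHom B.ρ A.ρ)).character h) := by
        rw [smul_eq_mul, ← mul_assoc, mul_invOf_self, one_mul]
    _ = (Fintype.card H : ℂ)
          * (finrank ℂ (Representation.linHom B.ρ A.ρ).invariants : ℂ) :=
        by rw [← h1, smul_eq_mul, invOf_eq_inv, Nat.card_eq_fintype_card]
    _ = (Fintype.card H : ℂ) * (finrank ℂ (B ⟶ A) : ℂ) := by rw [h2]

end RepStuff

section Bridge
open CategoryTheory FDRep
variable {H : Type} [Group H] [Fintype H]

/-- Subrepresentation on an invariant submodule. -/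
noncomputable def subRep (U : FDRep ℂ H) (S : Submodule ℂ U) (hS : ∀ (h : H), ∀ x ∈ S, U.ρ h x ∈ S) :
    Representation ℂ H S where
  toFun h := (U.ρ h).restrict (hS h)
  map_one' := by
    refine LinearMap.ext fun x => Subtype.ext ?_
    simp only [Module.End.one_apply, LinearMap.restrict_coe_apply, map_one]
  map_mul' g h := by
    refine LinearMap.ext fun x => Subtype.ext ?_
    simp only [Module.End.mul_apply, LinearMap.restrict_coe_apply, map_mul]

lemma simple_to_submodule (U : FDRep ℂ H) [CategoryTheory.Simple U] (S : Submodule ℂ U)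
    (hS : ∀ (h : H), ∀ x ∈ S, U.ρ h x ∈ S) : S = ⊥ ∨ S = ⊤ := by
  by_cases hbot : S = ⊥
  · exact Or.inl hbot
  · right
    let US : FDRep ℂ H := FDRep.of (subRep U S hS)
    let ι : US ⟶ U := ⟨FGModuleCat.ofHom (S.subtype : S →ₗ[ℂ] U), by
      intro g
      ext x
      show (S.subtype) (((U.ρ g).restrict (hS g)) x) = U.ρ g (S.subtype x)
      simp only [Submodule.subtype_apply, LinearMap.restrict_coe_apply]⟩
    have hmono : Mono ι := by
      have : Mono ((Action.forget (FGModuleCat ℂ) (MonCat.of H)).map ι) := by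
        have : Mono ((forget₂ (FGModuleCat ℂ) (ModuleCat ℂ)).map
            ((Action.forget (FGModuleCat ℂ) (MonCat.of H)).map ι)) := by
          rw [ModuleCat.mono_iff_injective]
          exact S.injective_subtype
        exact (forget₂ (FGModuleCat ℂ) (ModuleCat ℂ)).mono_of_mono_map this
      exact (Action.forget (FGModuleCat ℂ) (MonCat.of H)).mono_of_mono_map this
    obtain ⟨x, hxS, hx0⟩ := Submodule.ne_bot_iff S |>.mp hbot
    have hne : ι ≠ 0 := by
      intro h0
      have : ι.hom (⟨x, hxS⟩ : S) = 0 := by rw [h0]; rfl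
      exact hx0 this
    have : CategoryTheory.IsIso ι := (CategoryTheory.Simple.mono_isIso_iff_nonzero ι).mpr hne
    let e := FDRep.isoToLinearEquiv (CategoryTheory.asIso ι)
    have he : ∀ y : S, e y = (y : U) := fun y => rfl
    rw [Submodule.eq_top_iff']
    intro v
    have : v = e (e.symm v) := (e.apply_symm_apply v).symm
    rw [this, he]
    exact (e.symm v).2

end Bridge

section Endgame

variable {G : Type} [Group G]

lemma endgame (N : Subgroup G) [hN : N.Normal] (hodd : Odd N.index)
    (θ : ↥N → ℂ) (hclass : ∀ n₀ n : ↥N, θ (n₀⁻¹ * n * n₀) = θ n)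
    (g₀ : G) (hE : ∀ n m : ↥N, (↑m : G) = g₀⁻¹ * ↑n * g₀ → θ m = θ n⁻¹) :
    ∀ n : ↥N, θ n⁻¹ = θ n := by
  classical
  have hcm : ∀ (x : G) (n : ↥N), x⁻¹ * ↑n * x ∈ N := fun x n => by
    simpa using hN.conj_mem ↑n n.2 x⁻¹
  have hcm' : ∀ (x : G) (n : ↥N), x * ↑n * x⁻¹ ∈ N := fun x n => by
    simpa using hN.conj_mem ↑n n.2 x
  -- inverse version of hE
  have hEinv : ∀ n m : ↥N, (↑m : G) = g₀ * ↑n * g₀⁻¹ → θ m = θ n⁻¹ := by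
    intro n m hm
    have h2 := hE m⁻¹ n⁻¹ (by
      show ((n⁻¹ : ↥N) : G) = g₀⁻¹ * (↑(m⁻¹) : G) * g₀
      push_cast [hm]; group)
    rw [inv_inv] at h2
    exact h2.symm
  -- the inertia subgroup of θ
  let I : Subgroup G :=
    { carrier := {x : G | ∀ n m : ↥N, (↑m : G) = x⁻¹ * ↑n * x → θ m = θ n}
      one_mem' := by
        intro n m hm
        have : m = n := Subtype.ext (by simpa using hm)
        rw [this]
      mul_mem' := by
        intro x y hx hy n m hm
        have k : ↥N := ⟨x⁻¹ * ↑n * x, hcm x n⟩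
        have h1 : θ (⟨x⁻¹ * ↑n * x, hcm x n⟩ : ↥N) = θ n := hx n _ rfl
        have h2 : θ m = θ (⟨x⁻¹ * ↑n * x, hcm x n⟩ : ↥N) :=
          hy _ m (by rw [hm]; show _ = y⁻¹ * (x⁻¹ * ↑n * x) * y; group)
        exact h2.trans h1
      inv_mem' := by
        intro x hx n m hm
        exact (hx m n (by rw [hm]; group)).symm }
  have hmemI : ∀ x : G, x ∈ I ↔ ∀ n m : ↥N, (↑m : G) = x⁻¹ * ↑n * x → θ m = θ n :=
    fun x => Iff.rfl
  have hNleI : N ≤ I := by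
    intro x hxN
    rw [hmemI]
    intro n m hm
    have : m = (⟨x, hxN⟩ : ↥N)⁻¹ * n * ⟨x, hxN⟩ := Subtype.ext (by simpa using hm)
    rw [this]
    exact hclass _ n
  -- auxiliary: θ of the g₀-conjugate of an inverse
  have hEi : ∀ n m : ↥N, (↑m : G) = g₀⁻¹ * ↑n * g₀ → θ m⁻¹ = θ n := by
    intro n m hm
    have := hE n⁻¹ m⁻¹ (by push_cast [hm]; group)
    rw [inv_inv] at this
    exact this
  have hEinvi : ∀ n m : ↥N, (↑m : G) = g₀ * ↑n * g₀⁻¹ → θ m⁻¹ = θ n := by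
    intro n m hm
    have := hEinv n⁻¹ m⁻¹ (by push_cast [hm]; group)
    rw [inv_inv] at this
    exact this
  have claimA : ∀ x ∈ I, g₀ * x * g₀⁻¹ ∈ I := by
    intro x hx
    rw [hmemI]
    intro n m hm
    set a : ↥N := ⟨g₀⁻¹ * ↑n * g₀, hcm g₀ n⟩ with ha
    set b : ↥N := ⟨x⁻¹ * ↑a * x, hcm x a⟩ with hb
    have h1 : θ b⁻¹ = θ a⁻¹ := by
      have := hx a⁻¹ b⁻¹ (by rw [hb]; push_cast; group)
      exact this
    have h2 : θ a⁻¹ = θ n := by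
      have := hEi n a rfl
      exact this
    have hm' : (↑m : G) = g₀ * ↑b * g₀⁻¹ := by rw [hm, hb]; show _ = g₀ * (x⁻¹ * ↑a * x) * g₀⁻¹; rw [ha]; group
    have h3 : θ m = θ b⁻¹ := hEinv b m hm'
    rw [h3, h1, h2]
  have claimB : ∀ x ∈ I, g₀⁻¹ * x * g₀ ∈ I := by
    intro x hx
    rw [hmemI]
    intro n m hm
    set a : ↥N := ⟨g₀ * ↑n * g₀⁻¹, hcm' g₀ n⟩ with ha
    set b : ↥N := ⟨x⁻¹ * ↑a * x, hcm x a⟩ with hb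
    have h1 : θ b⁻¹ = θ a⁻¹ := hx a⁻¹ b⁻¹ (by rw [hb]; push_cast; group)
    have h2 : θ a⁻¹ = θ n := hEinvi n a rfl
    have hm' : (↑m : G) = g₀⁻¹ * ↑b * g₀ := by rw [hm, hb]; show _ = g₀⁻¹ * (x⁻¹ * ↑a * x) * g₀; rw [ha]; group
    have h3 : θ m = θ b⁻¹ := hE b m hm'
    rw [h3, h1, h2]
  have hg₀norm : g₀ ∈ Subgroup.normalizer (I : Set G) := by
    rw [Subgroup.mem_normalizer_iff]
    intro x
    constructor
    · intro hx; exact claimA x hx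
    · intro hx
      have := claimB _ hx
      simpa [mul_assoc] using this
  have hg₀sq : g₀ * g₀ ∈ I := by
    rw [hmemI]
    intro n m hm
    set a : ↥N := ⟨g₀⁻¹ * ↑n * g₀, hcm g₀ n⟩ with ha
    have h2 : θ a⁻¹ = θ n := hEi n a rfl
    have hm' : (↑m : G) = g₀⁻¹ * ↑a * g₀ := by rw [hm, ha]; group
    have h3 : θ m = θ a⁻¹ := hE a m hm'
    rw [h3, h2]
  -- quotient argument
  have hg₀I : g₀ ∈ I := by
    let J := Subgroup.normalizer (I : Set G)
    let jg : ↥J := ⟨g₀, hg₀norm⟩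
    have hIJ : (I.subgroupOf J).Normal := Subgroup.normal_in_normalizer
    let q : J ⧸ I.subgroupOf J := QuotientGroup.mk jg
    have hq2 : q ^ 2 = 1 := by
      have : q ^ 2 = ((jg ^ 2 : ↥J) : J ⧸ I.subgroupOf J) := by
        rw [← QuotientGroup.mk_pow]  -- may not exist
      rw [this, QuotientGroup.eq_one_iff]
      rw [Subgroup.mem_subgroupOf]
      have e : ((jg ^ 2 : ↥J) : G) = g₀ * g₀ := by push_cast [pow_two]; rfl
      rw [e]
      exact hg₀sq
    have hodvd2 : orderOf q ∣ 2 := orderOf_dvd_of_pow_eq_one hq2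
    have hodvdc : orderOf q ∣ I.relIndex J := by
      have h1 : orderOf q ∣ Nat.card (J ⧸ I.subgroupOf J) := orderOf_dvd_natCard q
      rwa [← Subgroup.index_eq_card] at h1
    have hoddrel : Odd (I.relIndex J) := by
      have hd1 : I.relIndex J ∣ I.index :=
        ⟨J.index, (Subgroup.relIndex_mul_index (Subgroup.le_normalizer)).symm⟩
      have hd2 : I.index ∣ N.index := Subgroup.index_dvd_of_le hNleI
      have hdvd := hd1.trans hd2
      rw [← Nat.not_even_iff_odd] at hodd ⊢
      intro he
      exact hodd (even_iff_two_dvd.mpr ((even_iff_two_dvd.mp he).trans hdvd))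
    have hord1 : orderOf q = 1 := by
      rcases (Nat.prime_two).eq_one_or_self_of_dvd _ hodvd2 with h | h
      · exact h
      · exfalso
        rw [← Nat.not_even_iff_odd] at hoddrel
        exact hoddrel (even_iff_two_dvd.mpr (h ▸ hodvdc))
    have hq1 : q = 1 := orderOf_eq_one_iff.mp hord1
    have : jg ∈ I.subgroupOf J := (QuotientGroup.eq_one_iff jg).mp hq1
    exact (Subgroup.mem_subgroupOf).mp this
  intro n
  have h1 : θ (⟨g₀⁻¹ * ↑n * g₀, hcm g₀ n⟩ : ↥N) = θ n := hg₀I n _ rfl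
  have h2 : θ (⟨g₀⁻¹ * ↑n * g₀, hcm g₀ n⟩ : ↥N) = θ n⁻¹ := hE n _ rfl
  rw [← h1, h2]

end Endgame

section Final
open CategoryTheory FDRep

lemma fdRep_hom_comm_apply {H : Type} [Group H] {A B : FDRep ℂ H} (f : A ⟶ B) (g : H) (x : A) :
    f.hom (A.ρ g x) = B.ρ g (f.hom x) :=
  congrArg (fun φ => φ.hom.hom x) (f.comm g)

lemma exists_ne_zero_hom {H : Type} [Group H] [Fintype H] (A B : FDRep ℂ H)
    (h : finrank ℂ (A ⟶ B) ≠ 0) : ∃ f : A ⟶ B, f ≠ 0 := by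
  by_contra hc
  push_neg at hc
  exact h (finrank_zero_iff_forall_zero.mpr hc)

/-- If `G/N` has odd order and `χ` is a real-valued irreducible character of `G`,
then every irreducible constituent of the restriction of `χ` to `N` is real-valued. -/
theorem constituents_of_restriction_real_of_odd_index
    (G : Type) [Group G] [Fintype G] (N : Subgroup G) [N.Normal]
    (hodd : Odd N.index) (χ : G → ℂ) (hχ : IsIrredChar G χ) (hreal : RealValued G χ)
    (θ : ↥N → ℂ) [Fintype ↥N] (hθ : IsIrredChar ↥N θ)
    (hconst : charInner ↥N (fun n : ↥N => χ ↑n) θ ≠ 0) :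
    RealValued ↥N θ := by
  classical
  obtain ⟨V, hVs, hVc⟩ := hχ
  obtain ⟨W, hWs, hWc⟩ := hθ
  haveI := hVs
  haveI := hWs
  set Res : FDRep ℂ ↥N := FDRep.of (V.ρ.comp N.subtype) with hRes
  have hResC : ∀ n : ↥N, Res.character n = χ ↑n := by
    intro n
    show LinearMap.trace ℂ V (V.ρ ↑n) = χ ↑n
    rw [← hVc]; rfl
  set Wd : FDRep ℂ ↥N := FDRep.of (Representation.dual W.ρ) with hWd
  have hWdC : ∀ n : ↥N, Wd.character n = θ n⁻¹ := by
    intro n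
    rw [← hWc]
    exact FDRep.char_dual W n
  have hθconj : ∀ n : ↥N, (starRingEnd ℂ) (θ n) = θ n⁻¹ := by
    intro n; rw [← hWc]; exact conj_char W n
  have hχinv : ∀ g : G, χ g⁻¹ = χ g := by
    intro g
    rw [← hreal g, ← hVc]
    exact (conj_char V g).symm
  have hcard : (Fintype.card ↥N : ℂ) ≠ 0 := Nat.cast_ne_zero.mpr Fintype.card_ne_zero
  set Ssum : ℂ := ∑ n : ↥N, χ ↑n * (starRingEnd ℂ) (θ n) with hSsum
  have hCI : charInner ↥N (fun n : ↥N => χ ↑n) θ = (Fintype.card ↥N : ℂ)⁻¹ * Ssum := rfl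
  have hSne : Ssum ≠ 0 := by
    intro h0
    exact hconst (by rw [hCI, h0, mul_zero])
  -- f : W ⟶ Res nonzero
  have hsum1 : Ssum = (Fintype.card ↥N : ℂ) * (finrank ℂ (W ⟶ Res) : ℂ) := by
    rw [← sum_char_mul_eq_finrank_hom Res W, hSsum]
    refine Finset.sum_congr rfl fun n _ => ?_
    rw [hResC, hθconj, ← hWc]
  have hfr1 : finrank ℂ (W ⟶ Res) ≠ 0 := by
    intro h0
    rw [h0] at hsum1
    exact hSne (by rw [hsum1]; norm_num)
  -- h : Res ⟶ Wd nonzero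
  have hsum2 : ∑ n : ↥N, Wd.character n * Res.character n⁻¹ = (starRingEnd ℂ) Ssum := by
    rw [hSsum, map_sum, ← Equiv.sum_comp (Equiv.inv ↥N)
      (fun n => Wd.character n * Res.character n⁻¹)]
    refine Finset.sum_congr rfl fun n _ => ?_
    show Wd.character n⁻¹ * Res.character n⁻¹⁻¹ = _
    rw [hWdC, hResC, inv_inv, map_mul, Complex.conj_conj, hreal]
    ring
  have hfr2 : finrank ℂ (Res ⟶ Wd) ≠ 0 := by
    intro h0
    have h1 := sum_char_mul_eq_finrank_hom Wd Res
    rw [hsum2, h0] at h1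
    apply hSne
    have : (starRingEnd ℂ) Ssum = 0 := by rw [h1]; norm_num
    simpa using congrArg (starRingEnd ℂ) this
  obtain ⟨f, hf0⟩ := exists_ne_zero_hom W Res hfr1
  obtain ⟨hmap, hh0⟩ := exists_ne_zero_hom Res Wd hfr2
  have hcm : ∀ (x : G) (n : ↥N), x⁻¹ * ↑n * x ∈ N := fun x n => by
    simpa using ‹N.Normal›.conj_mem ↑n n.2 x⁻¹
  -- underlying linear maps
  let F : (W : Type) →ₗ[ℂ] (V : Type) := f.hom.hom.hom
  let Hm : (V : Type) →ₗ[ℂ] Module.Dual ℂ W := hmap.hom.hom.hom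
  have hfc : ∀ (n : ↥N) (x : W), F (W.ρ n x) = V.ρ ↑n (F x) :=
    fun n x => fdRep_hom_comm_apply f n x
  have hhc : ∀ (n : ↥N) (v : V), Hm (V.ρ ↑n v) = Representation.dual W.ρ n (Hm v) :=
    fun n v => fdRep_hom_comm_apply hmap n v
  have hFne : F ≠ 0 := by
    intro hF
    exact hf0 (Action.Hom.ext (InducedCategory.hom_ext (ModuleCat.hom_ext hF)))
  have hHne : Hm ≠ 0 := by
    intro hH
    exact hh0 (Action.Hom.ext (InducedCategory.hom_ext (ModuleCat.hom_ext hH)))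
  obtain ⟨w₀, hw₀⟩ : ∃ w, F w ≠ 0 := by
    by_contra hc
    push_neg at hc
    exact hFne (LinearMap.ext hc)
  set U : Submodule ℂ (V : Type) := ⨆ g : G, LinearMap.range ((V.ρ g) ∘ₗ F) with hU
  have hUinv : ∀ (x : G), ∀ v ∈ U, V.ρ x v ∈ U := by
    intro x v hv
    rw [hU] at hv
    refine Submodule.iSup_induction (motive := fun v => V.ρ x v ∈ U) _ hv (fun g y hy => ?_) ?_
      (fun a b ha hb => ?_)
    · obtain ⟨w, rfl⟩ := hy
      have : V.ρ x (((V.ρ g) ∘ₗ F) w) ∈ ⨆ g : G, LinearMap.range ((V.ρ g) ∘ₗ F) :=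
        Submodule.mem_iSup_of_mem (x * g) ⟨w, by
          simp only [LinearMap.comp_apply, map_mul, Module.End.mul_apply]⟩
      rwa [← hU] at this
    · show V.ρ x 0 ∈ U
      rw [map_zero]; exact U.zero_mem
    · show V.ρ x (a + b) ∈ U
      rw [map_add]
      exact U.add_mem ha hb
  have hUne : U ≠ ⊥ := by
    intro hb
    have hmem : F w₀ ∈ ⨆ g : G, LinearMap.range ((V.ρ g) ∘ₗ F) :=
      Submodule.mem_iSup_of_mem 1 ⟨w₀, by
        simp only [LinearMap.comp_apply, map_one, Module.End.one_apply]⟩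
    rw [← hU, hb, Submodule.mem_bot] at hmem
    exact hw₀ hmem
  have hUtop : U = ⊤ := (simple_to_submodule V U hUinv).resolve_left hUne
  have hex : ∃ g₀ : G, Hm ∘ₗ ((V.ρ g₀) ∘ₗ F) ≠ 0 := by
    by_contra hc
    push_neg at hc
    apply hHne
    refine LinearMap.ext fun v => ?_
    have hvU : v ∈ U := by rw [hUtop]; trivial
    rw [hU] at hvU
    show Hm v = 0
    refine Submodule.iSup_induction (motive := fun y => Hm y = 0) _ hvU (fun g y hy => ?_)
      (map_zero Hm) (fun a b ha hb => by
        show Hm (a + b) = 0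
        rw [map_add, show Hm a = 0 from ha, show Hm b = 0 from hb, add_zero])
    obtain ⟨w, rfl⟩ := hy
    exact congrArg (fun (φ : (W : Type) →ₗ[ℂ] Module.Dual ℂ W) => φ w) (hc g)
  obtain ⟨g₀, hg₀⟩ := hex
  set u : (W : Type) →ₗ[ℂ] Module.Dual ℂ W := Hm ∘ₗ ((V.ρ g₀) ∘ₗ F) with hu_def
  -- equivariance of u
  have hu : ∀ (n : ↥N) (w : W),
      u (W.ρ (⟨g₀⁻¹ * ↑n * g₀, hcm g₀ n⟩ : ↥N) w) = Representation.dual W.ρ n (u w) := by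
    intro n w
    show Hm (V.ρ g₀ (F (W.ρ _ w))) = Representation.dual W.ρ n (Hm (V.ρ g₀ (F w)))
    rw [hfc]
    have h1 : V.ρ g₀ (V.ρ (g₀⁻¹ * ↑n * g₀) (F w)) = V.ρ ↑n (V.ρ g₀ (F w)) := by
      rw [← Module.End.mul_apply, ← map_mul, ← Module.End.mul_apply (V.ρ ↑n), ← map_mul]
      congr 2
      group
    show Hm (V.ρ g₀ (V.ρ (g₀⁻¹ * ↑n * g₀) (F w))) = _
    rw [h1, hhc]
  -- kernel of u is invariant
  have hWirr := simple_to_submodule W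
  have hkerinv : ∀ (m : ↥N), ∀ x ∈ LinearMap.ker u, W.ρ m x ∈ LinearMap.ker u := by
    intro m x hx
    have hmem : g₀ * ↑m * g₀⁻¹ ∈ N := by simpa using ‹N.Normal›.conj_mem ↑m m.2 g₀
    have hrepr : m = (⟨g₀⁻¹ * ↑(⟨g₀ * ↑m * g₀⁻¹, hmem⟩ : ↥N) * g₀, hcm g₀ _⟩ : ↥N) := by
      apply Subtype.ext
      show (↑m : G) = g₀⁻¹ * (g₀ * ↑m * g₀⁻¹) * g₀
      group
    rw [LinearMap.mem_ker] at hx ⊢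
    rw [hrepr, hu, hx, map_zero]
  have hker : LinearMap.ker u = ⊥ := by
    rcases hWirr (LinearMap.ker u) hkerinv with h | h
    · exact h
    · exact absurd (LinearMap.ker_eq_top.mp h) hg₀
  -- range of u is invariant; use annihilator
  have hrange : LinearMap.range u = ⊤ := by
    set T : Submodule ℂ (Module.Dual ℂ W) := LinearMap.range u with hT
    have hTinv : ∀ (n : ↥N), ∀ ξ ∈ T, Representation.dual W.ρ n ξ ∈ T := by
      rintro n ξ ⟨w, rfl⟩
      exact ⟨W.ρ (⟨g₀⁻¹ * ↑n * g₀, hcm g₀ n⟩ : ↥N) w, hu n w⟩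
    have hAnn : ∀ (n : ↥N), ∀ x ∈ T.dualCoannihilator, W.ρ n x ∈ T.dualCoannihilator := by
      intro n x hx
      rw [Submodule.mem_dualCoannihilator] at hx ⊢
      intro ξ hξ
      have h1 : Representation.dual W.ρ n⁻¹ ξ ∈ T := hTinv n⁻¹ ξ hξ
      have h2 := hx _ h1
      have h3 : (Representation.dual W.ρ n⁻¹ ξ) x = ξ (W.ρ n x) := by
        show (Module.Dual.transpose (R := ℂ) (W.ρ n⁻¹⁻¹) ξ) x = ξ (W.ρ n x)
        rw [inv_inv]
        rfl
      rw [h3] at h2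
      exact h2
    rcases hWirr T.dualCoannihilator hAnn with h | h
    · -- dual coannihilator is ⊥, so T = ⊤ by dimension count
      have hfr := Subspace.finrank_add_finrank_dualCoannihilator_eq T
      rw [h, finrank_bot, add_zero] at hfr
      apply Submodule.eq_top_of_finrank_eq
      rw [hfr, Subspace.dual_finrank_eq]
    · exfalso
      obtain ⟨w₁, hw₁⟩ : ∃ w, u w ≠ 0 := by
        by_contra hc
        push_neg at hc
        exact hg₀ (LinearMap.ext hc)
      apply hw₁
      refine LinearMap.ext fun x => ?_
      have hx : x ∈ T.dualCoannihilator := by rw [h]; trivial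
      rw [Submodule.mem_dualCoannihilator] at hx
      exact hx (u w₁) ⟨w₁, rfl⟩
  -- u is a linear equivalence
  let e : (W : Type) ≃ₗ[ℂ] Module.Dual ℂ W := LinearEquiv.ofBijective u
    ⟨LinearMap.ker_eq_bot.mp hker, LinearMap.range_eq_top.mp hrange⟩
  -- character identity (E)
  have hE : ∀ n m : ↥N, (↑m : G) = g₀⁻¹ * ↑n * g₀ → θ m = θ n⁻¹ := by
    intro n m hm
    have hmeq : m = (⟨g₀⁻¹ * ↑n * g₀, hcm g₀ n⟩ : ↥N) := Subtype.ext hm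
    have hconj : Representation.dual W.ρ n = e.conj (W.ρ m) := by
      refine LinearMap.ext fun ξ => ?_
      rw [LinearEquiv.conj_apply]
      show _ = e ((W.ρ m) (e.symm ξ))
      have he : ∀ w : W, e w = u w := fun w => rfl
      rw [he, hmeq, hu]
      congr 1
      show ξ = u (e.symm ξ)
      rw [← he, e.apply_symm_apply]
    have htr : Wd.character n = W.character m := by
      show LinearMap.trace ℂ _ (Representation.dual W.ρ n) = LinearMap.trace ℂ _ (W.ρ m)
      rw [hconj, LinearMap.trace_conj']
    rw [← hWdC n, ← hWc]
    exact htr.symm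
  -- class function property of θ
  have hclass : ∀ n₀ n : ↥N, θ (n₀⁻¹ * n * n₀) = θ n := by
    intro n₀ n
    rw [← hWc]
    have := FDRep.char_conj W n n₀⁻¹
    simpa using this
  -- group theory endgame
  have hfinal := endgame N hodd θ hclass g₀ hE
  intro n
  exact (hθconj n).trans (hfinal n)
end Final
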